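/- Let X = ℕ, let (p_n) enumerate the primes, and for each infinite bit string b ∈ {0,1}^ℕ with finitely many 1s define h_b with supp(h_b) = {p_n^{1 + Σ_{i=1}^n b_i} : n ∈ ℕ}. The class H = {h_b : |b| < ∞} is countable, satisfies UUS, is non-uniformly generatable, but does not satisfy the Eventually Unbounded Closure property: there exist h ∈ H and an enumeration x₁, x₂, ... of supp(h) such that |⟨x₁,...,x_t⟩_H| < ∞ for every t ∈ ℕ. -/
import Mathlib


open Set

variable {X : Type*}

/-- The set of distinct examples seen in the first `t` steps of the stream `x`. -/
def seenSet (x : ℕ → X) (t : ℕ) : Set X := x '' {i | i < t}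

/-- The finite prefix `x₁, ..., x_t` of the stream, as a list. -/
def prefList (x : ℕ → X) (t : ℕ) : List X := List.ofFn (fun i : Fin t => x i)

/-- The version space of `H` induced by the positive examples `S`. -/
def versionSpace (H : Set (Set X)) (S : Set X) : Set (Set X) := {h | h ∈ H ∧ S ⊆ h}

/-- The closure `⟨S⟩_H`: common positive examples of all consistent hypotheses. -/
def hclosure (H : Set (Set X)) (S : Set X) : Set X := ⋂₀ versionSpace H S

/-- There exist `d` distinct examples with nonempty version space and finite closure. -/
def FinClosureWitness (H : Set (Set X)) (d : ℕ) : Prop :=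
  ∃ S : Finset X, S.card = d ∧ (versionSpace H ↑S).Nonempty ∧ (hclosure H ↑S).Finite

/-- The Closure dimension of `H` is infinite. -/
def ClosureDimInf (H : Set (Set X)) : Prop := ∀ n : ℕ, ∃ d, n ≤ d ∧ FinClosureWitness H d

/-- The Closure dimension of `H` is at most `d`. -/
def ClosureDimLE (H : Set (Set X)) (d : ℕ) : Prop := ∀ d', d < d' → ¬ FinClosureWitness H d'

/-- Uniformly Unbounded Support property. -/
def UUS (H : Set (Set X)) : Prop := ∀ h ∈ H, h.Infinite

/-- The generator `G` outputs an unseen positive example of `h` at step `s`. -/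
def GenOK (G : List X → X) (h : Set X) (x : ℕ → X) (s : ℕ) : Prop :=
  G (prefList x s) ∈ h \ seenSet x s

def UniformlyGeneratable (H : Set (Set X)) : Prop :=
  ∃ G : List X → X, ∃ d : ℕ, ∀ h ∈ H, ∀ x : ℕ → X, (∀ i, x i ∈ h) →
    ∀ t, (seenSet x t).ncard = d → ∀ s, t ≤ s → GenOK G h x s

def NonUniformlyGeneratable (H : Set (Set X)) : Prop :=
  ∃ G : List X → X, ∀ h ∈ H, ∃ d : ℕ, ∀ x : ℕ → X, (∀ i, x i ∈ h) →
    ∀ t, (seenSet x t).ncard = d → ∀ s, t ≤ s → GenOK G h x s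

/-- `x` is an enumeration of the support `h`. -/
def IsEnum (h : Set X) (x : ℕ → X) : Prop := (∀ i, x i ∈ h) ∧ ∀ y ∈ h, ∃ i, x i = y

def GeneratableInLimit (H : Set (Set X)) : Prop :=
  ∃ G : List X → X, ∀ h ∈ H, ∀ x : ℕ → X, IsEnum h x →
    ∃ t, ∀ s, t ≤ s → GenOK G h x s

/-- The support `{p_n^{1 + Σ_{i ≤ n} b_i} : n ∈ ℕ}` associated to a bit string `b`. -/
def suppB (b : ℕ → Bool) : Set ℕ :=
  {m : ℕ | ∃ n : ℕ,
    m = (Nat.nth Nat.Prime n) ^ (1 + ((Finset.range (n + 1)).filter fun i => b i = true).card)}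

/-- The class `{h_b : b ∈ {0,1}^ℕ, |b| < ∞}`. -/
def Hbit : Set (Set ℕ) := {h | ∃ b : ℕ → Bool, {i | b i = true}.Finite ∧ h = suppB b}

/-- Count of ones of `b` up to index `n`. -/
def cnt (b : ℕ → Bool) (n : ℕ) : ℕ := ((Finset.range (n + 1)).filter fun i => b i = true).card

/-- Index of the prime base of a prime power. -/
def pidx (m : ℕ) : ℕ := Nat.count Nat.Prime m.minFac

/-- Exponent of a prime power. -/
noncomputable def pexp (m : ℕ) : ℕ := m.factorization m.minFac

noncomputable def Gen (l : List ℕ) : ℕ :=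
  match l.argmax pidx with
  | none => 0
  | some m => (Nat.nth Nat.Prime (pidx m + 1)) ^ (pexp m)

lemma pidx_pow (n e : ℕ) (he : e ≠ 0) : pidx (Nat.nth Nat.Prime n ^ e) = n := by
  unfold pidx
  rw [(Nat.prime_nth_prime n).pow_minFac he]
  exact Nat.count_nth fun hf => absurd hf Nat.infinite_setOf_prime

lemma pexp_pow (n e : ℕ) (he : e ≠ 0) : pexp (Nat.nth Nat.Prime n ^ e) = e := by
  unfold pexp
  rw [(Nat.prime_nth_prime n).pow_minFac he, (Nat.prime_nth_prime n).factorization_pow]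
  simp

lemma cnt_const (b : ℕ → Bool) (N : ℕ) (hN : ∀ i, b i = true → i < N) {n : ℕ} (hn : N ≤ n) :
    cnt b n = cnt b N := by
  unfold cnt
  congr 1
  ext i
  simp only [Finset.mem_filter, Finset.mem_range]
  constructor
  · rintro ⟨_, hbi⟩; exact ⟨by have := hN i hbi; omega, hbi⟩
  · rintro ⟨_, hbi⟩; exact ⟨by have := hN i hbi; omega, hbi⟩

lemma suppB_eq (b : ℕ → Bool) : suppB b = {m | ∃ n, m = Nat.nth Nat.Prime n ^ (1 + cnt b n)} := rfl

lemma mem_suppB_self {b : ℕ → Bool} {m : ℕ} (hm : m ∈ suppB b) :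
    m = Nat.nth Nat.Prime (pidx m) ^ (1 + cnt b (pidx m)) := by
  rw [suppB_eq] at hm
  obtain ⟨n, rfl⟩ := hm
  rw [pidx_pow n _ (by omega)]

lemma hbit_countable : Hbit.Countable := by
  have heq : Hbit = suppB '' {b | {i | b i = true}.Finite} := by
    ext h
    constructor
    · rintro ⟨b, hb, rfl⟩; exact ⟨b, hb, rfl⟩
    · rintro ⟨b, hb, rfl⟩; exact ⟨b, hb, rfl⟩
  rw [heq]
  apply Set.Countable.image
  rw [← Set.countable_coe_iff]
  have hinj : Function.Injective
      (fun b : {b : ℕ → Bool // {i | b i = true}.Finite} => b.2.toFinset) := by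
    rintro ⟨b, hb⟩ ⟨c, hc⟩ h
    simp only [Set.Finite.toFinset_inj] at h
    ext i
    have := Set.ext_iff.mp h i
    simp only [Set.mem_setOf_eq] at this
    cases hbi : b i <;> cases hci : c i <;> simp_all
  exact hinj.countable

lemma hbit_uus : UUS Hbit := by
  rintro h ⟨b, hb, rfl⟩
  have hr : Set.range (fun n => Nat.nth Nat.Prime n ^ (1 + cnt b n)) = suppB b := by
    rw [suppB_eq]
    ext m
    simp only [Set.mem_range, Set.mem_setOf_eq, eq_comm]
  rw [← hr]
  apply Set.infinite_range_of_injective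
  intro n m hnm
  have h1 := congrArg pidx hnm
  rwa [pidx_pow _ _ (by omega), pidx_pow _ _ (by omega)] at h1

lemma hbit_nug : NonUniformlyGeneratable Hbit := by
  refine ⟨Gen, ?_⟩
  rintro h ⟨b, hb, rfl⟩
  obtain ⟨N, hN⟩ : ∃ N, ∀ i, b i = true → i < N := by
    obtain ⟨N, hN⟩ := hb.bddAbove
    exact ⟨N + 1, fun i hi => by have := hN hi; omega⟩
  refine ⟨N + 1, ?_⟩
  intro x hx t hcard s hts
  have hmemsupp : ∀ i, x i = Nat.nth Nat.Prime (pidx (x i)) ^ (1 + cnt b (pidx (x i))) :=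
    fun i => mem_suppB_self (hx i)
  -- Step 1: some seen element has prime index ≥ N
  have hstep1 : ∃ i, i < t ∧ N ≤ pidx (x i) := by
    by_contra hcon
    push_neg at hcon
    have hsub : pidx '' seenSet x t ⊆ ↑(Finset.range N) := by
      rintro _ ⟨y, ⟨i, hi, rfl⟩, rfl⟩
      simp only [Finset.coe_range, Set.mem_Iio]
      exact hcon i hi
    have hinj : Set.InjOn pidx (seenSet x t) := by
      rintro y ⟨i, hi, rfl⟩ z ⟨j, hj, rfl⟩ hpe
      rw [hmemsupp i, hmemsupp j, hpe]
    have hle := Set.ncard_le_ncard hsub (Finset.range N).finite_toSet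
    rw [Set.ncard_image_of_injOn hinj, hcard, Set.ncard_coe_finset, Finset.card_range] at hle
    omega
  obtain ⟨i0, hi0t, hi0N⟩ := hstep1
  have hi0s : i0 < s := lt_of_lt_of_le hi0t hts
  have hxmem : ∀ i, i < s → x i ∈ prefList x s := by
    intro i hi
    rw [prefList, List.mem_ofFn]
    exact ⟨⟨i, hi⟩, rfl⟩
  obtain ⟨m, hm⟩ : ∃ m, (prefList x s).argmax pidx = some m := by
    cases hma : (prefList x s).argmax pidx with
    | none =>
      exfalso
      have hnil := List.argmax_eq_none.mp hma
      have := hxmem i0 hi0s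
      rw [hnil] at this
      simp at this
    | some m => exact ⟨m, rfl⟩
  have hmmem : m ∈ prefList x s := List.argmax_mem hm
  obtain ⟨j, hjs, hj⟩ : ∃ j, j < s ∧ x j = m := by
    rw [prefList, List.mem_ofFn] at hmmem
    obtain ⟨⟨j, hjs⟩, hj⟩ := hmmem
    exact ⟨j, hjs, hj⟩
  have hNm : N ≤ pidx m := le_trans hi0N (List.le_of_mem_argmax (hxmem i0 hi0s) hm)
  have hmeq := hmemsupp j
  rw [hj] at hmeq
  have hpexp : pexp m = 1 + cnt b (pidx m) := by
    conv_lhs => rw [hmeq]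
    rw [pexp_pow _ _ (by omega)]
  have hGen : Gen (prefList x s) = Nat.nth Nat.Prime (pidx m + 1) ^ (1 + cnt b (pidx m)) := by
    unfold Gen
    rw [hm]
    show Nat.nth Nat.Prime (pidx m + 1) ^ pexp m = _
    rw [hpexp]
  have hcnteq : cnt b (pidx m + 1) = cnt b (pidx m) :=
    (cnt_const b N hN (by omega)).trans (cnt_const b N hN (by omega : N ≤ pidx m)).symm
  constructor
  · -- membership in suppB b
    rw [suppB_eq]
    exact ⟨pidx m + 1, by rw [hGen, hcnteq]⟩
  · -- not seen
    rintro ⟨i, his, hxi⟩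
    have h1 : pidx (x i) ≤ pidx m := List.le_of_mem_argmax (hxmem i his) hm
    have h2 : pidx (x i) = pidx m + 1 := by
      rw [hxi, hGen, pidx_pow _ _ (by omega)]
    omega

lemma cnt_false (n : ℕ) : cnt (fun _ => false) n = 0 := by
  simp [cnt]

lemma hbit_euc_fail : ∃ h ∈ Hbit, ∃ x : ℕ → ℕ, IsEnum h x ∧
    ∀ t : ℕ, (hclosure Hbit (seenSet x t)).Finite := by
  refine ⟨suppB (fun _ => false), ⟨fun _ => false, by simp, rfl⟩,
    fun n => Nat.nth Nat.Prime n, ⟨?_, ?_⟩, ?_⟩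
  · intro i
    rw [suppB_eq]
    exact ⟨i, by rw [cnt_false]; simp⟩
  · intro y hy
    rw [suppB_eq] at hy
    obtain ⟨n, rfl⟩ := hy
    exact ⟨n, by rw [cnt_false]; simp⟩
  · intro t
    apply Set.Finite.subset ((Set.finite_Iio t).image (fun n => Nat.nth Nat.Prime n))
    intro y hy
    have h0 : suppB (fun _ => false) ∈ versionSpace Hbit (seenSet (fun n => Nat.nth Nat.Prime n) t) := by
      refine ⟨⟨fun _ => false, by simp, rfl⟩, ?_⟩
      rintro _ ⟨i, hi, rfl⟩
      rw [suppB_eq]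
      exact ⟨i, by rw [cnt_false]; simp⟩
    have hy0 := Set.mem_sInter.mp hy _ h0
    rw [suppB_eq] at hy0
    obtain ⟨n, rfl⟩ := hy0
    rw [cnt_false] at *
    by_cases hnt : n < t
    · exact ⟨n, hnt, by norm_num⟩
    · exfalso
      push_neg at hnt
      set b' : ℕ → Bool := fun i => decide (i = n) with hb'def
      have hcntb' : ∀ j, j < n → cnt b' j = 0 := by
        intro j hj
        unfold cnt
        rw [Finset.card_eq_zero]
        ext i
        simp only [Finset.mem_filter, Finset.mem_range, hb'def, decide_eq_true_eq,
          Finset.notMem_empty, iff_false, not_and]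
        omega
      have hb'mem : suppB b' ∈ versionSpace Hbit (seenSet (fun n => Nat.nth Nat.Prime n) t) := by
        refine ⟨⟨b', ?_, rfl⟩, ?_⟩
        · apply Set.Finite.subset (Set.finite_singleton n)
          intro i hi
          simp only [hb'def, Set.mem_setOf_eq, decide_eq_true_eq] at hi
          simp [hi]
        · rintro _ ⟨i, hi, rfl⟩
          rw [suppB_eq]
          refine ⟨i, ?_⟩
          rw [hcntb' i (by simp only [Set.mem_setOf_eq] at hi; omega)]
          simp
      have hmem := Set.mem_sInter.mp hy _ hb'mem
      rw [suppB_eq] at hmem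
      obtain ⟨m, hm⟩ := hmem
      have hcn : cnt b' n = 1 := by
        unfold cnt
        rw [Finset.card_eq_one]
        refine ⟨n, ?_⟩
        ext i
        simp only [Finset.mem_filter, Finset.mem_range, hb'def, decide_eq_true_eq,
          Finset.mem_singleton]
        omega
      have h1 := congrArg pidx hm
      rw [pidx_pow _ _ (by omega), pidx_pow _ _ (by omega)] at h1
      have h2 := congrArg pexp hm
      rw [pexp_pow _ _ (by omega), pexp_pow _ _ (by omega)] at h2
      rw [← h1, hcn] at h2
      omega

/-- `Hbit` is countable, satisfies UUS, and is non-uniformly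
generatable, but fails the Eventually Unbounded Closure property: some `h ∈ Hbit`
has an enumeration all of whose closures are finite. -/
theorem stmt18 :
    Hbit.Countable ∧ UUS Hbit ∧ NonUniformlyGeneratable Hbit ∧
    ∃ h ∈ Hbit, ∃ x : ℕ → ℕ, IsEnum h x ∧
      ∀ t : ℕ, (hclosure Hbit (seenSet x t)).Finite := by
  exact ⟨hbit_countable, hbit_uus, hbit_nug, hbit_euc_fail⟩
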